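/- Let φ be a monotone E3CNF formula and let Δ ⊆ I_φ have minimum size among all subsets whose deletion leaves I_φ consistent with respect to Σ_{AB→C→B} = {AB → C, C → B}. Then for every variable x_j, Δ does not contain both tuples (x_j, 1, x_j) and (x_j, 0, x_j). -/
import Mathlib


/-- A functional dependency `X → Y` is a pair of attribute sets; two tuples form a
`φ`-conflict if they agree on every attribute of `X` but differ on some attribute of `Y`. -/
def IsPhiConflict {α V : Type*} (X Y : Finset α) (s t : α → V) : Prop :=
  (∀ a ∈ X, s a = t a) ∧ (∃ a ∈ Y, s a ≠ t a)

instance {α V : Type*} [DecidableEq V] (X Y : Finset α) (s t : α → V) :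
    Decidable (IsPhiConflict X Y s t) := by
  unfold IsPhiConflict; infer_instance

/-- Two tuples form a conflict w.r.t. a finite FD set if they form a `φ`-conflict
for some FD `φ` of the set. -/
def IsConflict {α V : Type*} (FDs : Finset (Finset α × Finset α)) (s t : α → V) : Prop :=
  ∃ fd ∈ FDs, IsPhiConflict fd.1 fd.2 s t

instance {α V : Type*} [DecidableEq V] (FDs : Finset (Finset α × Finset α)) (s t : α → V) :
    Decidable (IsConflict FDs s t) := by
  unfold IsConflict; infer_instance

/-- A set of tuples is consistent w.r.t. an FD set if no two of its tuples form a conflict. -/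
def Consistent {α V : Type*} (FDs : Finset (Finset α × Finset α)) (J : Finset (α → V)) : Prop :=
  ∀ s ∈ J, ∀ t ∈ J, ¬ IsConflict FDs s t

/-- `opt FDs I` is the minimum of `dist(J,I) = |I| - |J|` over all consistent subsets `J ⊆ I`. -/
noncomputable def opt {α V : Type*} (FDs : Finset (Finset α × Finset α))
    (I : Finset (α → V)) : ℕ :=
  sInf {d : ℕ | ∃ J ⊆ I, Consistent FDs J ∧ d = I.card - J.card}

/-- A monotone E3CNF formula with `n` variables and `m` clauses: each clause has exactly
three literals over pairwise distinct variables and is monotone, i.e. all its literals have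
the same polarity `pol i` (`true` = all positive, `false` = all negative). -/
structure MonotoneE3CNF (n m : ℕ) where
  lit : Fin m → Fin 3 → Fin n
  pol : Fin m → Bool
  distinct : ∀ i, Function.Injective (lit i)

/-- The number of clauses satisfied by assignment `τ`. -/
def MonotoneE3CNF.numSat {n m : ℕ} (φ : MonotoneE3CNF n m) (τ : Fin n → Bool) : ℕ :=
  (Finset.univ.filter fun i : Fin m => ∃ k, τ (φ.lit i k) = φ.pol i).card

/-- `#τ_max(φ)`: the maximum number of simultaneously satisfiable clauses. -/
def MonotoneE3CNF.maxSat {n m : ℕ} (φ : MonotoneE3CNF n m) : ℕ :=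
  Finset.univ.sup fun τ : Fin n → Bool => φ.numSat τ

/-- Values used in the instance `I_φ`: clause constants `c_i`, variable constants `x_j`,
and the two Boolean values; all pairwise distinct. -/
abbrev Val2 (n m : ℕ) := Sum (Fin m) (Sum (Fin n) Bool)

/-- The two tuples `(x_j, 1, x_j)` and `(x_j, 0, x_j)` built for variable `x_j`. -/
def varTuple {n m : ℕ} (j : Fin n) (b : Bool) : Fin 3 → Val2 n m :=
  ![Sum.inr (Sum.inl j), Sum.inr (Sum.inr b), Sum.inr (Sum.inl j)]

/-- The tuple built for the `k`-th literal of clause `i`: `(c_i, 1, x_j)` if the variable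
`j = lit i k` occurs positively in clause `i`, `(c_i, 0, x_j)` if it occurs negatively. -/
def clauseTuple {n m : ℕ} (φ : MonotoneE3CNF n m) (i : Fin m) (k : Fin 3) : Fin 3 → Val2 n m :=
  ![Sum.inl i, Sum.inr (Sum.inr (φ.pol i)), Sum.inr (Sum.inl (φ.lit i k))]

/-- The instance `I_φ` over attributes `A = 0`, `B = 1`, `C = 2`. -/
def Iphi2 {n m : ℕ} (φ : MonotoneE3CNF n m) : Finset (Fin 3 → Val2 n m) :=
  (Finset.univ.image fun p : Fin n × Bool => varTuple p.1 p.2) ∪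
    (Finset.univ.image fun p : Fin m × Fin 3 => clauseTuple φ p.1 p.2)

/-- The FD set `Σ_{AB→C→B} = {AB → C, C → B}`. -/
def Sigma2 : Finset (Finset (Fin 3) × Finset (Fin 3)) := {({0, 1}, {2}), ({2}, {1})}

lemma conflict_iff {V : Type*} (s t : Fin 3 → V) :
    IsConflict Sigma2 s t ↔ ((s 0 = t 0 ∧ s 1 = t 1 ∧ s 2 ≠ t 2) ∨ (s 2 = t 2 ∧ s 1 ≠ t 1)) := by
  simp [IsConflict, Sigma2, IsPhiConflict]
  aesop

lemma conflict_symm {V : Type*} {s t : Fin 3 → V} (h : IsConflict Sigma2 s t) :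
    IsConflict Sigma2 t s := by
  rw [conflict_iff] at h ⊢
  rcases h with ⟨h0, h1, h2⟩ | ⟨h2, h1⟩
  · exact Or.inl ⟨h0.symm, h1.symm, fun e => h2 e.symm⟩
  · exact Or.inr ⟨h2.symm, fun e => h1 e.symm⟩

lemma mem_Iphi2 {n m : ℕ} {φ : MonotoneE3CNF n m} {s : Fin 3 → Val2 n m} :
    s ∈ Iphi2 φ ↔ (∃ j b, s = varTuple j b) ∨ ∃ i k, s = clauseTuple φ i k := by
  simp [Iphi2, eq_comm]

/-- If `Δ ⊆ I_φ` has minimum size among all subsets of `I_φ` whose deletion leaves `I_φ`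
consistent w.r.t. `Σ_{AB→C→B} = {AB → C, C → B}`, then for every variable `x_j`,
`Δ` does not contain both tuples `(x_j, 1, x_j)` and `(x_j, 0, x_j)`. -/
theorem stmt4 {n m : ℕ} (φ : MonotoneE3CNF n m)
    (Δ : Finset (Fin 3 → Val2 n m)) (hΔ : Δ ⊆ Iphi2 φ)
    (hcons : Consistent Sigma2 (Iphi2 φ \ Δ))
    (hmin : ∀ Δ' ⊆ Iphi2 φ, Consistent Sigma2 (Iphi2 φ \ Δ') → Δ.card ≤ Δ'.card) :
    ∀ j : Fin n, ¬ ((varTuple j true ∈ Δ) ∧ (varTuple j false ∈ Δ)) := by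
  classical
  intro j hj
  obtain ⟨ht, hf⟩ := hj
  -- choose the polarity b to put back
  obtain ⟨b, hbΔ, hkey⟩ : ∃ b : Bool, varTuple j b ∈ Δ ∧
      ∀ i k, φ.lit i k = j → clauseTuple φ i k ∈ Iphi2 φ \ Δ → φ.pol i = b := by
    by_cases hneg : ∃ i k, φ.lit i k = j ∧ φ.pol i = false ∧ clauseTuple φ i k ∈ Iphi2 φ \ Δ
    · obtain ⟨i0, k0, h1, h2, h3⟩ := hneg
      refine ⟨false, hf, fun i k hlik hmem => ?_⟩
      by_contra hne
      have hpi : φ.pol i = true := by cases h : φ.pol i <;> simp_all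
      refine hcons _ hmem _ h3 ((conflict_iff _ _).2 (Or.inr ⟨?_, ?_⟩))
      · show Sum.inr (Sum.inl (φ.lit i k)) = Sum.inr (Sum.inl (φ.lit i0 k0))
        rw [hlik, h1]
      · show Sum.inr (Sum.inr (φ.pol i)) ≠ Sum.inr (Sum.inr (φ.pol i0))
        rw [hpi, h2]; simp
    · refine ⟨true, ht, fun i k hlik hmem => ?_⟩
      by_contra hne
      have hfi : φ.pol i = false := by cases h : φ.pol i <;> simp_all
      exact hneg ⟨i, k, hlik, hfi, hmem⟩
  have hvI : varTuple (n:=n) (m:=m) j b ∈ Iphi2 φ := mem_Iphi2.2 (Or.inl ⟨j, b, rfl⟩)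
  -- v conflicts with nothing remaining
  have hnc : ∀ s ∈ Iphi2 φ \ Δ, ¬ IsConflict Sigma2 (varTuple j b) s := by
    intro s hs hc
    rw [conflict_iff] at hc
    obtain ⟨hsI, hsΔ⟩ := Finset.mem_sdiff.1 hs
    rcases mem_Iphi2.1 hsI with ⟨j', b', rfl⟩ | ⟨i, k, rfl⟩
    · rcases hc with ⟨h0, h1, h2⟩ | ⟨h2, h1⟩
      · simp [varTuple] at h0 h1 h2
        exact h2 h0
      · simp [varTuple] at h2 h1
        subst h2
        cases b' <;> exact hsΔ (by assumption)
    · rcases hc with ⟨h0, h1, h2⟩ | ⟨h2, h1⟩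
      · simp [varTuple, clauseTuple] at h0
      · simp [varTuple, clauseTuple] at h2 h1
        exact h1 (hkey i k h2.symm hs).symm
  -- deleting Δ.erase (varTuple j b) is still consistent
  have hcons' : Consistent Sigma2 (Iphi2 φ \ Δ.erase (varTuple j b)) := by
    have hmem : ∀ x, x ∈ Iphi2 φ \ Δ.erase (varTuple j b) → x = varTuple j b ∨ x ∈ Iphi2 φ \ Δ := by
      intro x hx
      rw [Finset.mem_sdiff, Finset.mem_erase] at hx
      by_cases hxv : x = varTuple j b
      · exact Or.inl hxv
      · exact Or.inr (Finset.mem_sdiff.2 ⟨hx.1, fun h => hx.2 ⟨hxv, h⟩⟩)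
    intro s hs t htm hc
    rcases hmem s hs with rfl | hs'
    · rcases hmem t htm with rfl | ht'
      · rw [conflict_iff] at hc; simp at hc
      · exact hnc t ht' hc
    · rcases hmem t htm with rfl | ht'
      · exact hnc s hs' (conflict_symm hc)
      · exact hcons s hs' t ht' hc
  have hsub : Δ.erase (varTuple j b) ⊆ Iphi2 φ := (Finset.erase_subset _ _).trans hΔ
  have hle := hmin _ hsub hcons'
  have hlt : (Δ.erase (varTuple j b)).card < Δ.card := Finset.card_erase_lt_of_mem hbΔ
  omega
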